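/- A finite quiver Q is path reversible if and only if its Kronecker square Q̂ is path reversible. -/
import Mathlib

structure Quiv where
  V : Type
  A : Type
  s : A → V
  t : A → V

namespace Quiv

def kron (Q : Quiv) : Quiv where
  V := Q.V × Q.V
  A := Q.A × Q.A
  s := fun p => (Q.s p.1, Q.s p.2)
  t := fun p => (Q.t p.1, Q.t p.2)

instance toQuiver (Q : Quiv) : Quiver Q.V :=
  ⟨fun i j => {a : Q.A // Q.s a = i ∧ Q.t a = j}⟩

def PathN (Q : Quiv) (i j : Q.V) (k : ℕ) : Type :=
  {p : Quiver.Path i j // p.length = k}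

end Quiv

def Quiv.PathReversible (Q : Quiv) : Prop :=
  ∀ i j : Q.V, Nonempty (Quiver.Path i j) → Nonempty (Quiver.Path j i)

namespace Quiv

def proj1 {Q : Quiv} : ∀ {x y : Q.kron.V}, Quiver.Path x y → Quiver.Path x.1 y.1
  | _, _, Quiver.Path.nil => Quiver.Path.nil
  | _, _, Quiver.Path.cons p e =>
      (proj1 p).cons ⟨e.1.1, congrArg Prod.fst e.2.1, congrArg Prod.fst e.2.2⟩

def proj2 {Q : Quiv} : ∀ {x y : Q.kron.V}, Quiver.Path x y → Quiver.Path x.2 y.2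
  | _, _, Quiver.Path.nil => Quiver.Path.nil
  | _, _, Quiver.Path.cons p e =>
      (proj2 p).cons ⟨e.1.2, congrArg Prod.snd e.2.1, congrArg Prod.snd e.2.2⟩

lemma proj1_length {Q : Quiv} {x y : Q.kron.V} (p : Quiver.Path x y) :
    (proj1 p).length = p.length := by
  induction p with
  | nil => simp [proj1, proj2]
  | cons p e ih => simpa [proj1] using ih

lemma proj2_length {Q : Quiv} {x y : Q.kron.V} (p : Quiver.Path x y) :
    (proj2 p).length = p.length := by
  induction p with
  | nil => simp [proj1, proj2]
  | cons p e ih => simpa [proj2] using ih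

def zip {Q : Quiv} : ∀ {a c : Q.V} (p : Quiver.Path a c) {b d : Q.V} (q : Quiver.Path b d),
    p.length = q.length → @Quiver.Path Q.kron.V Q.kron.toQuiver (a, b) (c, d)
  | _, _, Quiver.Path.nil, _, _, Quiver.Path.nil, _ => Quiver.Path.nil
  | _, _, Quiver.Path.cons p e, _, _, Quiver.Path.cons q f, h =>
      (zip p q (by simpa using h)).cons
        ⟨(e.1, f.1), Prod.ext e.2.1 f.2.1, Prod.ext e.2.2 f.2.2⟩
  | _, _, Quiver.Path.nil, _, _, Quiver.Path.cons _ _, h => absurd h (by simp)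
  | _, _, Quiver.Path.cons _ _, _, _, Quiver.Path.nil, h => absurd h (by simp)

def cyclePow {Q : Quiv} {i : Q.V} (c : Quiver.Path i i) : ℕ → Quiver.Path i i
  | 0 => Quiver.Path.nil
  | n+1 => (cyclePow c n).comp c

lemma cyclePow_length {Q : Quiv} {i : Q.V} (c : Quiver.Path i i) :
    ∀ n, (cyclePow c n).length = n * c.length
  | 0 => by simp [cyclePow]
  | n+1 => by simp [cyclePow, cyclePow_length c n]; ring

end Quiv

theorem stmt12 (Q : Quiv) [Finite Q.V] [Finite Q.A] :
    Q.PathReversible ↔ Q.kron.PathReversible := by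
  constructor
  · intro h x y ⟨P⟩
    set p1 := Quiv.proj1 P with hp1
    set p2 := Quiv.proj2 P with hp2
    have h1 : p1.length = P.length := Quiv.proj1_length P
    have h2 : p2.length = P.length := Quiv.proj2_length P
    rcases hn : P.length with _ | k
    · have e1 : x.1 = y.1 := Quiver.Path.eq_of_length_zero p1 (by rw [h1, hn])
      have e2 : x.2 = y.2 := Quiver.Path.eq_of_length_zero p2 (by rw [h2, hn])
      have : x = y := Prod.ext e1 e2
      exact ⟨this ▸ Quiver.Path.nil⟩
    · obtain ⟨r1⟩ := h x.1 y.1 ⟨p1⟩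
      obtain ⟨r2⟩ := h x.2 y.2 ⟨p2⟩
      set n := k + 1
      set m1 := r1.length
      set m2 := r2.length
      refine ⟨Quiv.zip (r1.comp (Quiv.cyclePow (p1.comp r1) (m2 + k)))
        (r2.comp (Quiv.cyclePow (p2.comp r2) (m1 + k))) ?_⟩
      rw [hn] at h1 h2
      simp [Quiv.cyclePow_length, h1, h2]
      ring
  · intro h i j ⟨p⟩
    obtain ⟨P⟩ := h (i, i) (j, j) ⟨Quiv.zip p p rfl⟩
    exact ⟨Quiv.proj1 P⟩
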